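/- The map π ↦ π' = (n+1) π(1) … π(n) (i.e., π'(1)=n+1 and π'(i+1)=π(i)) composed with the linking map, π ↦ Φ(π'), is a bijection from S_n onto S_{n+1}^c. -/

import Mathlib

/-- Cyclic addition of the constant `k` to all values of a permutation of
`{1, …, n}` (identifying positions/values with `Fin n`, 1-based position `i`
corresponding to `i - 1 : Fin n`): `(addConst π k) i = π i + k (mod n)`. -/
def addConst {n : ℕ} (π : Equiv.Perm (Fin n)) (k : ℕ) : Equiv.Perm (Fin n) :=
  π.trans (finRotate n ^ k)

/-- The linking permutation `Φ(π) = π⁻¹ ∘ (π + 1)`, i.e.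
`Φ(π) i = π⁻¹ (π i + 1)` with cyclic value addition (`n + 1 ≡ 1`). -/
def linkPerm {n : ℕ} (π : Equiv.Perm (Fin n)) : Equiv.Perm (Fin n) :=
  (π.trans (finRotate n)).trans π.symm

/-- A permutation has exactly one orbit: iterating it reaches any element from
any element. -/
def OneOrbit {n : ℕ} (φ : Equiv.Perm (Fin n)) : Prop :=
  ∀ x y : Fin n, ∃ m : ℕ, (φ ^ m) x = y

/-- The descent set of a permutation of `{1, …, n}`, as a set of 1-based
positions: `i ∈ [1, n-1]` is a descent iff `φ(i) > φ(i+1)`.  The 1-based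
position `i` corresponds to the element `i - 1 : Fin n`. -/
def desSet {n : ℕ} (φ : Equiv.Perm (Fin n)) : Set ℕ :=
  {i : ℕ | ∃ h : i < n, 1 ≤ i ∧
    φ ⟨i, h⟩ < φ ⟨i - 1, Nat.lt_of_le_of_lt (Nat.sub_le i 1) h⟩}

/-- `π` is the suffix array of the word `w` of length `n`: `π i` is the
(0-based) starting position of the `i`-th smallest suffix of `w` in the
lexicographic order on lists (a proper prefix precedes its extensions). -/
def IsSuffixArray {α : Type*} [LinearOrder α] {n : ℕ} (w : List α)
    (π : Equiv.Perm (Fin n)) : Prop :=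
  w.length = n ∧ ∀ i j : Fin n, i < j → w.drop (π i : ℕ) < w.drop (π j : ℕ)

/-- `π` is the Burrows–Wheeler array of the word `w` of length `n`: `π i` is
the (0-based) starting position of the `i`-th smallest cyclic shift of `w`. -/
def IsBWArray {α : Type*} [LinearOrder α] {n : ℕ} (w : List α)
    (π : Equiv.Perm (Fin n)) : Prop :=
  w.length = n ∧ ∀ i j : Fin n, i < j → w.rotate (π i : ℕ) < w.rotate (π j : ℕ)

/-- A word is primitive iff it is not a proper power of another word:
`w = v^k` implies `k = 1`. -/
def Primitive {α : Type*} (w : List α) : Prop :=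
  ∀ (v : List α) (k : ℕ), w = (List.replicate k v).flatten → k = 1

/-- From `σ ∈ S_n`, the permutation `π' = (n+1) σ(1) ⋯ σ(n) ∈ S_{n+1}`:
position `1` (element `0 : Fin (n+1)`) is sent to the value `n + 1`
(element `Fin.last n`), and position `i + 1` is sent to the value `σ(i)`. -/
def appendMax {n : ℕ} (σ : Equiv.Perm (Fin n)) : Equiv.Perm (Fin (n + 1)) :=
  ((finSuccEquiv n).trans σ.optionCongr).trans (finSuccEquiv' (Fin.last n)).symm

/-- Binomial coefficient with integer arguments, which is `0` when the lower
index is negative or exceeds the upper index. -/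
def intChoose (m r : ℤ) : ℕ :=
  if 0 ≤ r ∧ r ≤ m then m.toNat.choose r.toNat else 0

/-- `π ∈ S_{n+1}` is ascending-to-max.  Values are 1-based: the value
`i ∈ [1, n-1]` corresponds to `x.castSucc` where `x : Fin n` satisfies
`(x : ℕ) + 1 = i` … i.e. `x = i - 1`; the value `i + 1` corresponds to
`x.succ`, and the value `n + 1` corresponds to `Fin.last n`. -/
def AscendingToMax {n : ℕ} (π : Equiv.Perm (Fin (n + 1))) : Prop :=
  ∀ x : Fin n, (x : ℕ) + 1 < n →
    (π.symm x.castSucc < π.symm (Fin.last n) →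
      π.symm x.succ < π.symm (Fin.last n) →
      π.symm x.castSucc < π.symm x.succ) ∧
    (π.symm (Fin.last n) < π.symm x.castSucc →
      π.symm (Fin.last n) < π.symm x.succ →
      π.symm x.succ < π.symm x.castSucc)

/-- `π ∈ S_{n+1}` is non-nesting.  Values are 1-based: the values `i, j ∈ [1, n]`
correspond to `x.castSucc, y.castSucc` with `x, y : Fin n`, and the values
`i + 1, j + 1` to `x.succ, y.succ`. -/
def NonNesting {n : ℕ} (π : Equiv.Perm (Fin (n + 1))) : Prop :=
  ∀ x y : Fin n, π.symm x.castSucc < π.symm y.castSucc →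
    ((π.symm x.castSucc < π.symm x.succ ∧ π.symm y.castSucc < π.symm y.succ) ∨
      (π.symm x.succ < π.symm x.castSucc ∧ π.symm y.succ < π.symm y.castSucc)) →
    π.symm x.succ < π.symm y.succ

open Equiv Equiv.Perm

lemma appendMax_zero {n : ℕ} (σ : Equiv.Perm (Fin n)) : appendMax σ 0 = Fin.last n := by
  simp [appendMax, finSuccEquiv_zero]

lemma appendMax_succ {n : ℕ} (σ : Equiv.Perm (Fin n)) (i : Fin n) :
    appendMax σ i.succ = (σ i).castSucc := by
  simp [appendMax, finSuccEquiv_succ, finSuccEquiv'_symm_some]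

lemma linkPerm_eq {n : ℕ} (σ : Equiv.Perm (Fin n)) :
    linkPerm σ = σ⁻¹ * finRotate n * σ := rfl

open Fin.NatCast Fin.CommRing in
lemma finRotate_pow {n : ℕ} (m : ℕ) (x : Fin (n + 1)) :
    ((finRotate (n + 1)) ^ m) x = x + m := by
  induction m with
  | zero => simp
  | succ k ih =>
    rw [pow_succ', Equiv.Perm.mul_apply, ih, finRotate_succ_apply]
    push_cast
    ring

open Fin.NatCast Fin.CommRing in
lemma oneOrbit_finRotate {n : ℕ} : OneOrbit (finRotate (n + 1)) := by
  intro x y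
  exact ⟨(y - x).val, by rw [finRotate_pow, Fin.cast_val_eq_self, add_sub_cancel]⟩

lemma oneOrbit_conj {n : ℕ} (σ φ : Equiv.Perm (Fin n)) (h : OneOrbit φ) :
    OneOrbit (σ⁻¹ * φ * σ) := by
  intro x y
  obtain ⟨m, hm⟩ := h (σ x) (σ y)
  refine ⟨m, ?_⟩
  have : (σ⁻¹ * φ * σ) ^ m = σ⁻¹ * φ ^ m * σ := by
    rw [show σ⁻¹ * φ * σ = σ⁻¹ * φ * σ⁻¹⁻¹ by simp, conj_pow]; simp
  simp [this, Equiv.Perm.mul_apply, hm]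

open Fin.NatCast Fin.CommRing in
lemma comm_key {n : ℕ} (g : Equiv.Perm (Fin (n + 1)))
    (h : ∀ x, g (x + 1) = g x + 1) (x : Fin (n + 1)) : g x = g 0 + x := by
  have key : ∀ k : ℕ, g ((k : Fin (n + 1))) = g 0 + k := by
    intro k
    induction k with
    | zero => simp
    | succ j ih =>
      have : ((j + 1 : ℕ) : Fin (n + 1)) = (j : Fin (n + 1)) + 1 := by push_cast; ring
      rw [this, h, ih]
      ring
  have := key x.val
  rwa [Fin.cast_val_eq_self] at this


open Fin.NatCast Fin.CommRing in
/-- The mapping `π ↦ Φ(π')`, where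
`π' = (n+1) π(1) … π(n)`, is a bijection from `S_n` onto the set `S_{n+1}^c`
of one-orbit permutations of `{1, …, n+1}`. -/
theorem bijOn_linkPerm_appendMax_univ (n : ℕ) :
    Set.BijOn (fun π : Equiv.Perm (Fin n) => linkPerm (appendMax π))
      Set.univ {φ : Equiv.Perm (Fin (n + 1)) | OneOrbit φ} := by
  refine ⟨fun π _ => ?_, fun π₁ _ π₂ _ h => ?_, fun φ hφ => ?_⟩
  · show OneOrbit (linkPerm (appendMax π))
    rw [linkPerm_eq]
    exact oneOrbit_conj _ _ oneOrbit_finRotate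
  · -- injectivity
    simp only [linkPerm_eq] at h
    set σ₁ := appendMax π₁ with hσ₁
    set σ₂ := appendMax π₂ with hσ₂
    set c := finRotate (n + 1) with hc
    have hg : (σ₂ * σ₁⁻¹) * c = c * (σ₂ * σ₁⁻¹) := by
      calc (σ₂ * σ₁⁻¹) * c = σ₂ * (σ₁⁻¹ * c * σ₁) * σ₁⁻¹ := by simp [mul_assoc]
        _ = σ₂ * (σ₂⁻¹ * c * σ₂) * σ₁⁻¹ := by rw [h]
        _ = c * (σ₂ * σ₁⁻¹) := by simp [mul_assoc]
    set g := σ₂ * σ₁⁻¹ with hgdef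
    have hcomm : ∀ x, g (x + 1) = g x + 1 := by
      intro x
      have := congrFun (congrArg (fun ρ : Equiv.Perm (Fin (n+1)) => (ρ : Fin (n+1) → Fin (n+1))) hg) x
      simpa [Equiv.Perm.mul_apply, hc, finRotate_succ_apply] using this
    have hlast : g (Fin.last n) = Fin.last n := by
      have h1 : σ₁⁻¹ (Fin.last n) = 0 := by
        rw [hσ₁, ← appendMax_zero π₁]
        exact (appendMax π₁).symm_apply_apply 0
      simp [hgdef, Equiv.Perm.mul_apply, h1, hσ₂, appendMax_zero]
    have h0 : g 0 = 0 := by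
      have h2 := comm_key g hcomm (Fin.last n)
      rw [hlast] at h2
      have h3 : g 0 + Fin.last n = 0 + Fin.last n := by rw [zero_add, ← h2]
      exact add_right_cancel h3
    have hg1 : g = 1 := by
      refine Equiv.ext fun x => ?_
      have := comm_key g hcomm x
      simpa [h0] using this
    have hσ : σ₁ = σ₂ := (mul_inv_eq_one.mp hg1).symm
    refine Equiv.ext fun i => ?_
    have := congrFun (congrArg (fun ρ : Equiv.Perm (Fin (n+1)) => (ρ : Fin (n+1) → Fin (n+1))) hσ) i.succ
    simp only [hσ₁, hσ₂, appendMax_succ] at this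
    exact Fin.castSucc_injective n this
  · -- surjectivity
    have hφ' : OneOrbit φ := hφ
    match n, φ, hφ' with
    | 0, φ, _ =>
      haveI : Subsingleton (Fin (0 + 1)) := Fin.subsingleton_one
      refine ⟨1, trivial, Equiv.ext fun x => Subsingleton.elim _ _⟩
    | m + 1, φ, hφ' =>
      set c := finRotate (m + 2) with hc
      have hfix : ∀ z, φ z = z → ∀ k : ℕ, (φ ^ k) z = z := by
        intro z hz k
        induction k with
        | zero => simp
        | succ j ih => rw [pow_succ', Equiv.Perm.mul_apply, ih, hz]
      have hne : ∀ z, φ z ≠ z := by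
        intro z hz
        obtain ⟨k0, h0⟩ := hφ' z 0
        obtain ⟨k1, h1⟩ := hφ' z 1
        rw [hfix z hz] at h0 h1
        have h01 : (0 : Fin (m + 2)) = 1 := h0.symm.trans h1
        have := congrArg Fin.val h01
        simp at this
      have hcyc : φ.IsCycle := by
        refine ⟨0, hne 0, fun y _ => ?_⟩
        obtain ⟨k, hk⟩ := hφ' 0 y
        exact ⟨(k : ℤ), by simpa [zpow_natCast] using hk⟩
      have hcard : (finRotate (m + 2)).support.card = φ.support.card := by
        have hsupp : φ.support = Finset.univ := by
          ext z; simp [Equiv.Perm.mem_support, hne z]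
        rw [hsupp, support_finRotate]
      obtain ⟨g, hg'⟩ := isConj_iff.mp (isCycle_finRotate.isConj hcyc hcard)
      set τ₀ := g⁻¹ with hτ₀
      have hφeq : τ₀⁻¹ * c * τ₀ = φ := by rw [hτ₀, inv_inv]; exact hg'
      set k := (Fin.last (m + 1) - τ₀ 0).val with hk
      set τ := c ^ k * τ₀ with hτ
      have hτ0 : τ 0 = Fin.last (m + 1) := by
        rw [hτ]
        simp only [Equiv.Perm.mul_apply, hc, finRotate_pow, hk, Fin.cast_val_eq_self]
        ring
      have hτconj : τ⁻¹ * c * τ = φ := by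
        rw [hτ, ← hφeq]
        have hcp : c ^ k * c = c * c ^ k := (Commute.pow_self c k).eq
        calc (c ^ k * τ₀)⁻¹ * c * (c ^ k * τ₀)
            = τ₀⁻¹ * ((c ^ k)⁻¹ * (c * c ^ k)) * τ₀ := by simp [mul_assoc, mul_inv_rev]
          _ = τ₀⁻¹ * ((c ^ k)⁻¹ * (c ^ k * c)) * τ₀ := by rw [hcp]
          _ = τ₀⁻¹ * c * τ₀ := by simp [mul_assoc]
      have hne' : ∀ i : Fin (m + 1), τ i.succ ≠ Fin.last (m + 1) := by
        intro i hi
        have := τ.injective (hi.trans hτ0.symm)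
        exact Fin.succ_ne_zero i this
      set f : Fin (m + 1) → Fin (m + 1) := fun i => (τ i.succ).castPred (hne' i) with hf
      have hfinj : Function.Injective f := by
        intro a b hab
        apply Fin.succ_injective _ (τ.injective ?_)
        have := congrArg Fin.castSucc hab
        rwa [hf, Fin.castSucc_castPred, Fin.castSucc_castPred] at this
      set π := Equiv.ofBijective f (Finite.injective_iff_bijective.mp hfinj) with hπ
      have happ : appendMax π = τ := by
        refine Equiv.ext fun x => ?_
        induction x using Fin.cases with
        | zero => rw [appendMax_zero, hτ0]
        | succ i =>
          rw [appendMax_succ]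
          show (f i).castSucc = τ i.succ
          rw [hf, Fin.castSucc_castPred]
      exact ⟨π, trivial, by show linkPerm (appendMax π) = φ; rw [linkPerm_eq, happ, hτconj]⟩
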